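/- arXiv:2407.18636 — 5 statements merged into one kernel-verified Lean document; each statement's English description precedes it below -/
import Mathlib

section
/- Let D be a digraph on n vertices with δ⁰(D) ≥ (2/3 + γ)n where 0 < γ ≤ 1/18. Then for every vertex v of D, the number of ordered 4-tuples (a, b, c, d) of distinct vertices that form an absorber of v (i.e., abcd is a reverse square 4-path absorbing v) is at least 6γ³n⁴, provided n is sufficiently large (e.g., γn ≥ 2). -/
open Finset

/-- In a digraph on `n` vertices with minimum semi-degree at least
`(2/3 + γ)n`, `0 < γ ≤ 1/18` and `γn ≥ 2`, every vertex `v` has at least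
`6γ³n⁴` absorbers, counted as ordered 4-tuples `(a,b,c,d)` of distinct vertices
(also distinct from `v`) with arcs `ab, bc, cd, ca, db` and `va, vc, bv, dv`. -/
theorem stmt_4 (V : Type*) [Fintype V] [DecidableEq V] (A : V → V → Prop) [DecidableRel A]
    (γ : ℝ) (hγ0 : 0 < γ) (hγ1 : γ ≤ 1/18)
    (hn : (2 : ℝ) ≤ γ * (Fintype.card V : ℝ))
    (hdeg : ∀ v : V,
      (2/3 + γ) * (Fintype.card V : ℝ) ≤
        min ((Finset.univ.filter (fun u => A v u)).card : ℝ)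
            ((Finset.univ.filter (fun u => A u v)).card : ℝ)) :
    ∀ v : V,
      6 * γ^3 * (Fintype.card V : ℝ)^4 ≤
        ((Finset.univ.filter (fun t : V × V × V × V =>
          let a := t.1; let b := t.2.1; let c := t.2.2.1; let d := t.2.2.2
          a ≠ b ∧ a ≠ c ∧ a ≠ d ∧ b ≠ c ∧ b ≠ d ∧ c ≠ d ∧
          v ≠ a ∧ v ≠ b ∧ v ≠ c ∧ v ≠ d ∧
          A a b ∧ A b c ∧ A c d ∧ A c a ∧ A d b ∧
          A v a ∧ A v c ∧ A b v ∧ A d v)).card : ℝ) := by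
  intro v
  set n : ℝ := (Fintype.card V : ℝ) with hndef
  have hn0 : 0 < n := by nlinarith
  have hγn : 2 ≤ γ * n := hn
  set Nout : V → Finset V := fun u => Finset.univ.filter (fun w => A u w) with hNout
  set Nin : V → Finset V := fun u => Finset.univ.filter (fun w => A w u) with hNin
  have hout : ∀ u, (2/3 + γ) * n ≤ ((Nout u).card : ℝ) := fun u =>
    le_trans (hdeg u) (min_le_left _ _)
  have hin : ∀ u, (2/3 + γ) * n ≤ ((Nin u).card : ℝ) := fun u =>
    le_trans (hdeg u) (min_le_right _ _)
  -- intersection lower bound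
  have inter2 : ∀ X Y : Finset V, (X.card : ℝ) + (Y.card : ℝ) - n ≤ ((X ∩ Y).card : ℝ) := by
    intro X Y
    have h1 : (X ∪ Y).card + (X ∩ Y).card = X.card + Y.card :=
      Finset.card_union_add_card_inter X Y
    have h2 : (X ∪ Y).card ≤ Fintype.card V := Finset.card_le_univ _
    have := congrArg (fun k : ℕ => (k : ℝ)) h1
    push_cast at this
    have h2' : ((X ∪ Y).card : ℝ) ≤ n := by rw [hndef]; exact_mod_cast h2
    linarith
  -- sdiff lower bound
  have sdiff_bound : ∀ (S T : Finset V) (k : ℝ), (T.card : ℝ) ≤ k →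
      (S.card : ℝ) - k ≤ ((S \ T).card : ℝ) := by
    intro S T k hk
    have := Finset.card_le_card_sdiff_add_card (s := S) (t := T)
    have : (S.card : ℝ) ≤ ((S \ T).card : ℝ) + (T.card : ℝ) := by exact_mod_cast this
    linarith
  have card4 : ∀ x y z w : V, (({x, y, z, w} : Finset V).card : ℝ) ≤ 4 := by
    intro x y z w
    have h1 : ({x, y, z, w} : Finset V).card ≤ ({y, z, w} : Finset V).card + 1 :=
      Finset.card_insert_le _ _
    have h2 : ({y, z, w} : Finset V).card ≤ ({z, w} : Finset V).card + 1 :=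
      Finset.card_insert_le _ _
    have h3 : ({z, w} : Finset V).card ≤ ({w} : Finset V).card + 1 :=
      Finset.card_insert_le _ _
    have h4 : ({w} : Finset V).card = 1 := Finset.card_singleton _
    have : ({x, y, z, w} : Finset V).card ≤ 4 := by omega
    exact_mod_cast this
  have card3 : ∀ x y z : V, (({x, y, z} : Finset V).card : ℝ) ≤ 3 := by
    intro x y z
    have h2 : ({x, y, z} : Finset V).card ≤ ({y, z} : Finset V).card + 1 :=
      Finset.card_insert_le _ _
    have h3 : ({y, z} : Finset V).card ≤ ({z} : Finset V).card + 1 :=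
      Finset.card_insert_le _ _
    have h4 : ({z} : Finset V).card = 1 := Finset.card_singleton _
    have : ({x, y, z} : Finset V).card ≤ 3 := by omega
    exact_mod_cast this
  have card2 : ∀ x y : V, (({x, y} : Finset V).card : ℝ) ≤ 2 := by
    intro x y
    have h3 : ({x, y} : Finset V).card ≤ ({y} : Finset V).card + 1 :=
      Finset.card_insert_le _ _
    have h4 : ({y} : Finset V).card = 1 := Finset.card_singleton _
    have : ({x, y} : Finset V).card ≤ 2 := by omega
    exact_mod_cast this
  -- the four selection sets
  set Sa : Finset V := Nout v \ {v} with hSadef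
  set Sb : V → Finset V := fun a => (Nout a ∩ Nin v) \ {v, a} with hSbdef
  set Sc : V → V → Finset V := fun a b => ((Nout b ∩ Nin a) ∩ Nout v) \ {v, a, b} with hScdef
  set Sd : V → V → V → Finset V := fun a b c =>
    ((Nout c ∩ Nin b) ∩ Nin v) \ {v, a, b, c} with hSddef
  have hSa : (2/3) * n ≤ (Sa.card : ℝ) := by
    have h1 : ((Nout v).card : ℝ) - 1 ≤ (Sa.card : ℝ) := by
      apply sdiff_bound
      simp
    have := hout v
    linarith
  have hSb : ∀ a, (1/3) * n ≤ ((Sb a).card : ℝ) := by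
    intro a
    have h1 : ((Nout a ∩ Nin v).card : ℝ) - 2 ≤ ((Sb a).card : ℝ) :=
      sdiff_bound _ _ _ (card2 v a)
    have h2 := inter2 (Nout a) (Nin v)
    have := hout a; have := hin v
    linarith
  have hSc : ∀ a b, (3/2) * (γ * n) ≤ ((Sc a b).card : ℝ) := by
    intro a b
    have h1 : (((Nout b ∩ Nin a) ∩ Nout v).card : ℝ) - 3 ≤ ((Sc a b).card : ℝ) :=
      sdiff_bound _ _ _ (card3 v a b)
    have h2 := inter2 (Nout b ∩ Nin a) (Nout v)
    have h3 := inter2 (Nout b) (Nin a)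
    have := hout b; have := hin a; have := hout v
    linarith
  have hSd : ∀ a b c, γ * n ≤ ((Sd a b c).card : ℝ) := by
    intro a b c
    have h1 : (((Nout c ∩ Nin b) ∩ Nin v).card : ℝ) - 4 ≤ ((Sd a b c).card : ℝ) :=
      sdiff_bound _ _ _ (card4 v a b c)
    have h2 := inter2 (Nout c ∩ Nin b) (Nin v)
    have h3 := inter2 (Nout c) (Nin b)
    have := hout c; have := hin b; have := hin v
    linarith
  -- the sigma set
  set S : Finset ((_ : V) × (_ : V) × (_ : V) × V) :=
    Sa.sigma (fun a => (Sb a).sigma (fun b => (Sc a b).sigma (fun c => Sd a b c))) with hSdef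
  set T : Finset (V × V × V × V) := Finset.univ.filter (fun t : V × V × V × V =>
          let a := t.1; let b := t.2.1; let c := t.2.2.1; let d := t.2.2.2
          a ≠ b ∧ a ≠ c ∧ a ≠ d ∧ b ≠ c ∧ b ≠ d ∧ c ≠ d ∧
          v ≠ a ∧ v ≠ b ∧ v ≠ c ∧ v ≠ d ∧
          A a b ∧ A b c ∧ A c d ∧ A c a ∧ A d b ∧
          A v a ∧ A v c ∧ A b v ∧ A d v) with hTdef
  have hST : S.card ≤ T.card := by
    apply Finset.card_le_card_of_injOn (fun x => (x.1, x.2.1, x.2.2.1, x.2.2.2))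
    · intro x hx
      obtain ⟨a, b, c, d⟩ := x
      simp only [hSdef, Finset.mem_coe, Finset.mem_sigma] at hx
      obtain ⟨ha, hb, hc, hd⟩ := hx
      simp only [hSadef, hSbdef, hScdef, hSddef, Finset.mem_sdiff, Finset.mem_inter,
        hNout, hNin, Finset.mem_filter, Finset.mem_univ, true_and, Finset.mem_insert,
        Finset.mem_singleton, not_or] at ha hb hc hd
      simp only [hTdef, Finset.mem_coe, Finset.mem_filter, Finset.mem_univ, true_and]
      obtain ⟨hva, hav⟩ := ha
      obtain ⟨⟨hab, hbv⟩, hbnv, hbna⟩ := hb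
      obtain ⟨⟨⟨hbc, hca⟩, hvc⟩, hcnv, hcna, hcnb⟩ := hc
      obtain ⟨⟨⟨hcd, hdb⟩, hdv⟩, hdnv, hdna, hdnb, hdnc⟩ := hd
      exact ⟨fun h => hbna h.symm, fun h => hcna h.symm, fun h => hdna h.symm,
        fun h => hcnb h.symm, fun h => hdnb h.symm, fun h => hdnc h.symm,
        fun h => hav h.symm, fun h => hbnv h.symm, fun h => hcnv h.symm,
        fun h => hdnv h.symm, hab, hbc, hcd, hca, hdb, hva, hvc, hbv, hdv⟩
    · intro x hx y hy h
      obtain ⟨a, b, c, d⟩ := x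
      obtain ⟨a', b', c', d'⟩ := y
      simp only [Prod.mk.injEq] at h
      obtain ⟨h1, h2, h3, h4⟩ := h
      subst h1; subst h2; subst h3; subst h4; rfl
  have hScard : (S.card : ℝ) = ∑ a ∈ Sa, ∑ b ∈ Sb a, ∑ c ∈ Sc a b, ((Sd a b c).card : ℝ) := by
    rw [hSdef, Finset.card_sigma]
    push_cast
    refine Finset.sum_congr rfl (fun a _ => ?_)
    rw [Finset.card_sigma]
    push_cast
    refine Finset.sum_congr rfl (fun b _ => ?_)
    rw [Finset.card_sigma]
    push_cast
    rfl
  have hγn0 : (0:ℝ) ≤ γ * n := by linarith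
  have step3 : ∀ a b, (3/2) * (γ * n) * (γ * n) ≤ ∑ c ∈ Sc a b, ((Sd a b c).card : ℝ) := by
    intro a b
    calc (3/2) * (γ * n) * (γ * n) ≤ ((Sc a b).card : ℝ) * (γ * n) := by
          have := hSc a b; nlinarith
      _ ≤ ∑ c ∈ Sc a b, ((Sd a b c).card : ℝ) := by
          rw [← nsmul_eq_mul]
          exact Finset.card_nsmul_le_sum _ _ _ (fun c _ => hSd a b c)
  have step2 : ∀ a, (1/3) * n * ((3/2) * (γ * n) * (γ * n)) ≤
      ∑ b ∈ Sb a, ∑ c ∈ Sc a b, ((Sd a b c).card : ℝ) := by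
    intro a
    calc (1/3) * n * ((3/2) * (γ * n) * (γ * n))
        ≤ ((Sb a).card : ℝ) * ((3/2) * (γ * n) * (γ * n)) := by
          have := hSb a
          have hpos : (0:ℝ) ≤ (3/2) * (γ * n) * (γ * n) := by positivity
          nlinarith
      _ ≤ _ := by
          rw [← nsmul_eq_mul]
          exact Finset.card_nsmul_le_sum _ _ _ (fun b _ => step3 a b)
  have step1 : (2/3) * n * ((1/3) * n * ((3/2) * (γ * n) * (γ * n))) ≤ (S.card : ℝ) := by
    rw [hScard]
    calc (2/3) * n * ((1/3) * n * ((3/2) * (γ * n) * (γ * n)))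
        ≤ (Sa.card : ℝ) * ((1/3) * n * ((3/2) * (γ * n) * (γ * n))) := by
          have h := hSa
          have hpos : (0:ℝ) ≤ (1/3) * n * ((3/2) * (γ * n) * (γ * n)) := by positivity
          nlinarith
      _ ≤ _ := by
          rw [← nsmul_eq_mul]
          exact Finset.card_nsmul_le_sum _ _ _ (fun a _ => step2 a)
  have hTS : (S.card : ℝ) ≤ (T.card : ℝ) := by exact_mod_cast hST
  have hfinal : 6 * γ^3 * n^4 ≤ (2/3) * n * ((1/3) * n * ((3/2) * (γ * n) * (γ * n))) := by
    nlinarith [sq_nonneg (γ * n^2), sq_nonneg n, mul_pos hγ0 hn0,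
      mul_nonneg (mul_nonneg hγ0.le hγ0.le) (pow_nonneg hn0.le 4)]
  linarith
end

section
/- Let γ > 0, let j₀ = ⌈1/γ⌉ + 1, and suppose a sequence of positive reals x₁, x₂, …, x_{j₀} satisfies x₁ ≥ (1/3 + 2γ)n and x_{j+1} ≥ ((1+6γ)/(1+3γ))·x_j − C·n^{3/4} for all j, where C is an absolute constant. Then for n sufficiently large, x_{j₀} > n. -/
/-- Cascade growth estimate. If `γ > 0`, `j₀ = ⌈1/γ⌉ + 1`, and a
sequence of positive reals satisfies `x 1 ≥ (1/3 + 2γ)n` and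
`x (j+1) ≥ ((1+6γ)/(1+3γ))·x j − C·n^(3/4)`, then for `n` sufficiently large,
`x j₀ > n`. -/
theorem stmt_7 (γ : ℝ) (hγ : 0 < γ) (C : ℝ) :
    ∃ n₀ : ℕ, ∀ n : ℕ, n₀ ≤ n → ∀ x : ℕ → ℝ,
      (∀ j, 0 < x j) →
      (1/3 + 2*γ) * (n : ℝ) ≤ x 1 →
      (∀ j : ℕ, ((1 + 6*γ)/(1 + 3*γ)) * x j - C * (n : ℝ) ^ ((3:ℝ)/4) ≤ x (j+1)) →
      (n : ℝ) < x (⌈1/γ⌉₊ + 1) := by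
  set r : ℝ := (1 + 6*γ)/(1 + 3*γ) with hr_def
  set k : ℕ := ⌈1/γ⌉₊ with hk_def
  have h3γ : (0:ℝ) < 1 + 3*γ := by linarith
  have hr1 : 1 < r := by rw [hr_def, lt_div_iff₀ h3γ]; linarith
  have hr0 : 0 < r := lt_trans one_pos hr1
  set C' : ℝ := max C 0 with hC'def
  have hC'0 : 0 ≤ C' := le_max_right _ _
  have hCC' : C ≤ C' := le_max_left _ _
  set ε : ℝ := (1 + 18*γ + 18*γ^2)/(3*(1+3*γ)) with hε_def
  have hε0 : 0 < ε := by
    apply div_pos (by nlinarith) (by linarith)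
  set M : ℝ := r^k * k * C' with hM_def
  have hM0 : 0 ≤ M := by positivity
  refine ⟨⌈(M/ε)^4⌉₊ + 1, fun n hn x hxpos hx1 hrec => ?_⟩
  have hn1 : 1 ≤ n := le_trans (Nat.le_add_left 1 _) hn
  have hn0 : (0:ℝ) < n := by exact_mod_cast hn1
  have hpow0 : (0:ℝ) ≤ (n:ℝ) ^ ((3:ℝ)/4) := by positivity
  have hB0 : 0 ≤ C' * (n:ℝ) ^ ((3:ℝ)/4) := mul_nonneg hC'0 hpow0
  -- induction
  have key : ∀ m : ℕ, r^m * x 1 - r^m * m * (C' * (n:ℝ) ^ ((3:ℝ)/4)) ≤ x (1+m) := by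
    intro m
    induction m with
    | zero => simp
    | succ m ih =>
      have h1 := hrec (1+m)
      have h2 : r * x (1+m) - C' * (n:ℝ) ^ ((3:ℝ)/4) ≤ x (1+m+1) := by
        refine le_trans ?_ h1
        have : C * (n:ℝ) ^ ((3:ℝ)/4) ≤ C' * (n:ℝ) ^ ((3:ℝ)/4) :=
          mul_le_mul_of_nonneg_right hCC' hpow0
        linarith
      have h3 : r * (r^m * x 1 - r^m * m * (C' * (n:ℝ) ^ ((3:ℝ)/4))) ≤ r * x (1+m) :=
        mul_le_mul_of_nonneg_left ih (le_of_lt hr0)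
      have h4 : 1 ≤ r^(m+1) := one_le_pow₀ (le_of_lt hr1)
      have hp : r^(m+1) = r * r^m := pow_succ' r m
      have heq : r*(r^m*x 1 - r^m*(m:ℝ)*(C' * (n:ℝ) ^ ((3:ℝ)/4)))
          = r^(m+1)*x 1 - r^(m+1)*(m:ℝ)*(C' * (n:ℝ) ^ ((3:ℝ)/4)) := by rw [hp]; ring
      rw [heq] at h3
      have h5 : C' * (n:ℝ) ^ ((3:ℝ)/4) ≤ r^(m+1) * (C' * (n:ℝ) ^ ((3:ℝ)/4)) :=
        le_mul_of_one_le_left hB0 h4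
      have h6 : r^(m+1)*((m:ℝ)+1)*(C' * (n:ℝ) ^ ((3:ℝ)/4))
          = r^(m+1)*(m:ℝ)*(C' * (n:ℝ) ^ ((3:ℝ)/4)) + r^(m+1)*(C' * (n:ℝ) ^ ((3:ℝ)/4)) := by
        ring
      have hgoal : x (1+(m+1)) = x (1+m+1) := rfl
      rw [hgoal]
      push_cast
      linarith
  -- Bernoulli
  have hγ' : γ ≠ 0 := ne_of_gt hγ
  have ht0 : 0 < 3*γ/(1+3*γ) := by positivity
  have hr_eq : r = 1 + 3*γ/(1+3*γ) := by rw [hr_def]; field_simp; ring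
  have hbern : 1 + (k:ℝ) * (3*γ/(1+3*γ)) ≤ r^k := by
    rw [hr_eq]
    exact one_add_mul_le_pow (by nlinarith) k
  have hkγ : 1/γ ≤ (k:ℝ) := Nat.le_ceil _
  have hks : 1 + 3/(1+3*γ) ≤ r^k := by
    refine le_trans ?_ hbern
    have : 3/(1+3*γ) ≤ (k:ℝ) * (3*γ/(1+3*γ)) := by
      have h := mul_le_mul_of_nonneg_right hkγ (le_of_lt ht0)
      calc 3/(1+3*γ) = (1/γ) * (3*γ/(1+3*γ)) := by field_simp
        _ ≤ (k:ℝ) * (3*γ/(1+3*γ)) := h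
    linarith
  have hfinal1 : 1 + ε ≤ r^k * (1/3 + 2*γ) := by
    have heq : (1 + 3/(1+3*γ)) * (1/3 + 2*γ) = 1 + ε := by
      rw [hε_def]; field_simp; ring
    calc 1 + ε = (1 + 3/(1+3*γ)) * (1/3 + 2*γ) := heq.symm
      _ ≤ r^k * (1/3 + 2*γ) := by
          apply mul_le_mul_of_nonneg_right hks (by linarith)
  -- combine: x (1+k) ≥ (1+ε) n - M * n^{3/4}
  have hxk : (1+ε) * (n:ℝ) - M * (n:ℝ) ^ ((3:ℝ)/4) ≤ x (1+k) := by
    have h1 := key k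
    have h2 : r^k * ((1/3 + 2*γ) * (n:ℝ)) ≤ r^k * x 1 :=
      mul_le_mul_of_nonneg_left hx1 (pow_nonneg (le_of_lt hr0) k)
    have h3 : (1+ε) * (n:ℝ) ≤ r^k * (1/3 + 2*γ) * (n:ℝ) :=
      mul_le_mul_of_nonneg_right hfinal1 (le_of_lt hn0)
    have hMeq : r^k * (k:ℝ) * (C' * (n:ℝ) ^ ((3:ℝ)/4)) = M * (n:ℝ) ^ ((3:ℝ)/4) := by
      rw [hM_def]; ring
    nlinarith
  -- n large: M * n^{3/4} < ε * n
  have h4 : (M/ε)^4 < (n:ℝ) := by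
    have h5 : (M/ε)^4 ≤ (⌈(M/ε)^4⌉₊ : ℝ) := Nat.le_ceil _
    have h6 : (⌈(M/ε)^4⌉₊ : ℝ) < (n:ℝ) := by
      exact_mod_cast Nat.lt_of_lt_of_le (Nat.lt_succ_self _) hn
    linarith
  have hMε0 : 0 ≤ M/ε := div_nonneg hM0 (le_of_lt hε0)
  have h7 : M/ε < (n:ℝ) ^ ((1:ℝ)/4) := by
    have := Real.rpow_lt_rpow (by positivity) h4 (by norm_num : (0:ℝ) < 1/4)
    calc M/ε = ((M/ε)^4) ^ ((1:ℝ)/4) := by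
          rw [← Real.rpow_natCast (M/ε) 4, ← Real.rpow_mul hMε0]
          norm_num
      _ < (n:ℝ) ^ ((1:ℝ)/4) := this
  have h8 : M < ε * (n:ℝ) ^ ((1:ℝ)/4) := by
    rw [mul_comm]; exact (div_lt_iff₀ hε0).mp h7
  have hsplit : (n:ℝ) ^ ((1:ℝ)/4) * (n:ℝ) ^ ((3:ℝ)/4) = (n:ℝ) := by
    rw [← Real.rpow_add hn0]
    norm_num
  have hpow0' : (0:ℝ) < (n:ℝ) ^ ((3:ℝ)/4) := by positivity
  have h9 : M * (n:ℝ) ^ ((3:ℝ)/4) < ε * (n:ℝ) := by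
    calc M * (n:ℝ) ^ ((3:ℝ)/4) < (ε * (n:ℝ) ^ ((1:ℝ)/4)) * (n:ℝ) ^ ((3:ℝ)/4) :=
          mul_lt_mul_of_pos_right h8 hpow0'
      _ = ε * ((n:ℝ) ^ ((1:ℝ)/4) * (n:ℝ) ^ ((3:ℝ)/4)) := by ring
      _ = ε * (n:ℝ) := by rw [hsplit]
  have : (n:ℝ) < x (1+k) := by linarith
  rwa [add_comm] at this
end

section
/- For every k ≥ 1 there exists a digraph D on n = 3k vertices with minimum semi-degree δ⁰(D) = 2k − 1 = 2n/3 − 1 that contains no k pairwise vertex-disjoint directed 3-cycles (cyclic triangles). -/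
open Finset

open scoped Classical in
/-- For every `k ≥ 1` there is a loopless digraph on `n = 3k` vertices
whose minimum semi-degree equals `2k − 1 = 2n/3 − 1` which contains no `k` pairwise
vertex-disjoint cyclic triangles. -/
theorem stmt_11 (k : ℕ) (hk : 1 ≤ k) :
    ∃ A : Fin (3*k) → Fin (3*k) → Prop,
      (∀ v, ¬ A v v) ∧
      (∀ v : Fin (3*k),
        2*k - 1 ≤ min (Finset.univ.filter (fun u => A v u)).card
                      (Finset.univ.filter (fun u => A u v)).card) ∧
      (∃ v : Fin (3*k),
        min (Finset.univ.filter (fun u => A v u)).card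
            (Finset.univ.filter (fun u => A u v)).card = 2*k - 1) ∧
      ¬ ∃ f : Fin k → Fin (3*k) × Fin (3*k) × Fin (3*k),
        (∀ i, A (f i).1 (f i).2.1 ∧ A (f i).2.1 (f i).2.2 ∧ A (f i).2.2 (f i).1) ∧
        (∀ i, (f i).1 ≠ (f i).2.1 ∧ (f i).1 ≠ (f i).2.2 ∧ (f i).2.1 ≠ (f i).2.2) ∧
        (∀ i j, i ≠ j →
          Disjoint ({(f i).1, (f i).2.1, (f i).2.2} : Finset (Fin (3*k)))
                   ({(f j).1, (f j).2.1, (f j).2.2} : Finset (Fin (3*k)))) := by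
  have hm : 2*k - 1 < 3*k := by omega
  set b : Fin (3*k) := ⟨2*k-1, hm⟩ with hb
  have hbv : (b : ℕ) = 2*k-1 := rfl
  refine ⟨fun u v => u ≠ v ∧ ((u:ℕ) < 2*k-1 ∨ (v:ℕ) < 2*k-1), ?_, ?_, ?_, ?_⟩
  · intro v h; exact h.1 rfl
  · intro v
    have hcIio : (Iio b : Finset (Fin (3*k))).card = 2*k-1 := by rw [Fin.card_Iio, hbv]
    have hcsd : (Finset.univ \ {v} : Finset (Fin (3*k))).card = 3*k-1 := by
      rw [card_sdiff_of_subset (by simp), card_singleton, card_univ, Fintype.card_fin]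
    refine le_min ?_ ?_
    · by_cases hv : (v:ℕ) < 2*k-1
      · refine le_trans (le_of_le_of_eq (by omega) hcsd.symm) (card_le_card ?_)
        intro u hu
        simp only [mem_sdiff, mem_singleton] at hu
        simp only [mem_filter, mem_univ, true_and]
        exact ⟨fun h => hu.2 h.symm, Or.inl hv⟩
      · refine le_trans (le_of_eq hcIio.symm) (card_le_card ?_)
        intro u hu
        rw [mem_Iio, Fin.lt_def, hbv] at hu
        simp only [mem_filter, mem_univ, true_and]
        refine ⟨fun h => ?_, Or.inr hu⟩
        subst h; exact hv hu
    · by_cases hv : (v:ℕ) < 2*k-1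
      · refine le_trans (le_of_le_of_eq (by omega) hcsd.symm) (card_le_card ?_)
        intro u hu
        simp only [mem_sdiff, mem_singleton] at hu
        simp only [mem_filter, mem_univ, true_and]
        exact ⟨hu.2, Or.inr hv⟩
      · refine le_trans (le_of_eq hcIio.symm) (card_le_card ?_)
        intro u hu
        rw [mem_Iio, Fin.lt_def, hbv] at hu
        simp only [mem_filter, mem_univ, true_and]
        refine ⟨fun h => ?_, Or.inl hu⟩
        subst h; exact hv hu
  · refine ⟨b, ?_⟩
    convert (show min (2*k-1) (2*k-1) = 2*k-1 from min_self _) using 2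
    · trans (Iio b : Finset (Fin (3*k))).card
      · congr 1
        ext u
        simp only [mem_filter, mem_univ, true_and, mem_Iio, Fin.lt_def, hbv]
        constructor
        · rintro ⟨h, h' | h'⟩
          · omega
          · exact h'
        · intro h
          refine ⟨fun he => ?_, Or.inr h⟩
          rw [← he, hbv] at h; omega
      · rw [Fin.card_Iio, hbv]
    · trans (Iio b : Finset (Fin (3*k))).card
      · congr 1
        ext u
        simp only [mem_filter, mem_univ, true_and, mem_Iio, Fin.lt_def, hbv]
        constructor
        · rintro ⟨h, h' | h'⟩
          · exact h'
          · omega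
        · intro h
          refine ⟨fun he => ?_, Or.inl h⟩
          rw [he, hbv] at h; omega
      · rw [Fin.card_Iio, hbv]
  · rintro ⟨f, harc, hne, hdisj⟩
    set T : Fin k → Finset (Fin (3*k)) :=
      fun i => ({(f i).1, (f i).2.1, (f i).2.2} : Finset (Fin (3*k))) with hT
    have hTcard2 : ∀ i, 2 ≤ (T i ∩ Iio b).card := by
      intro i
      obtain ⟨⟨-, h12⟩, ⟨-, h23⟩, ⟨-, h31⟩⟩ := harc i
      obtain ⟨hn1, hn2, hn3⟩ := hne i
      have key : ((f i).1 : ℕ) < 2*k-1 ∧ ((f i).2.1 : ℕ) < 2*k-1 ∨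
          ((f i).1 : ℕ) < 2*k-1 ∧ ((f i).2.2 : ℕ) < 2*k-1 ∨
          ((f i).2.1 : ℕ) < 2*k-1 ∧ ((f i).2.2 : ℕ) < 2*k-1 := by tauto
      have : ∃ x y : Fin (3*k), x ∈ T i ∧ y ∈ T i ∧ x ≠ y ∧ x ∈ Iio b ∧ y ∈ Iio b := by
        simp only [mem_Iio, Fin.lt_def, hbv]
        rcases key with ⟨h, h'⟩ | ⟨h, h'⟩ | ⟨h, h'⟩
        · exact ⟨(f i).1, (f i).2.1, by simp [hT], by simp [hT], hn1, h, h'⟩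
        · exact ⟨(f i).1, (f i).2.2, by simp [hT], by simp [hT], hn2, h, h'⟩
        · exact ⟨(f i).2.1, (f i).2.2, by simp [hT], by simp [hT], hn3, h, h'⟩
      obtain ⟨x, y, hx, hy, hxy, hxb, hyb⟩ := this
      have hsub : ({x, y} : Finset (Fin (3*k))) ⊆ T i ∩ Iio b := by
        intro z hz
        rcases mem_insert.mp hz with h | h
        · subst h; exact mem_inter.mpr ⟨hx, hxb⟩
        · rw [mem_singleton] at h; subst h; exact mem_inter.mpr ⟨hy, hyb⟩
      calc 2 = ({x, y} : Finset (Fin (3*k))).card := (card_pair hxy).symm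
        _ ≤ _ := card_le_card hsub
    have hbiUnion : (Finset.univ.biUnion (fun i => T i ∩ Iio b)).card =
        ∑ i, (T i ∩ Iio b).card := by
      apply card_biUnion
      intro i _ j _ hij
      exact (hdisj i j hij).mono inter_subset_left inter_subset_left
    have hle : (Finset.univ.biUnion (fun i => T i ∩ Iio b)).card ≤
        (Iio b : Finset (Fin (3*k))).card := by
      apply card_le_card
      intro x hx
      obtain ⟨i, -, hx⟩ := mem_biUnion.mp hx
      exact (mem_inter.mp hx).2
    rw [Fin.card_Iio, hbv] at hle
    have hsum : 2*k ≤ ∑ i, (T i ∩ Iio b).card := by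
      calc 2*k = ∑ _i : Fin k, 2 := by simp [mul_comm]
        _ ≤ _ := Finset.sum_le_sum (fun i _ => hTcard2 i)
    omega
end

section
/- Let D be a digraph on n vertices with δ⁰(D) ≥ (2/3 + γ)n for 0 < γ ≤ 1/6, and let W ⊆ V(D) with |W| ≤ γn/4. Then for n sufficiently large there exists a set R ⊆ V(D) \ W with |R| = ⌈γ⁷n/2⌉ such that every vertex x ∈ V(D) satisfies |N⁺(x) ∩ R| ≥ (2/3 + γ/2)(|R| + 4) and |N⁻(x) ∩ R| ≥ (2/3 + γ/2)(|R| + 4). -/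
open Finset

lemma count_le {V : Type} [DecidableEq V] (U B : Finset V) (r j : ℕ) :
    ((U.powersetCard r).filter (fun R => (R ∩ B).card = j)).card ≤
      B.card.choose j * (U \ B).card.choose (r - j) := by
  rw [← Finset.card_powersetCard, ← Finset.card_powersetCard, ← Finset.card_product]
  apply Finset.card_le_card_of_injOn (fun R => (R ∩ B, R \ B))
  · intro R hR
    simp only [Finset.mem_coe, Finset.mem_filter, Finset.mem_powersetCard] at hR
    obtain ⟨⟨hRU, hRcard⟩, hj⟩ := hR
    have hcards := Finset.card_sdiff_add_card_inter R B
    simp only [Finset.mem_coe, Finset.mem_product, Finset.mem_powersetCard]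
    exact ⟨⟨Finset.inter_subset_right, hj⟩,
      Finset.sdiff_subset_sdiff hRU le_rfl, by omega⟩
  · intro R₁ h₁ R₂ h₂ h
    have h1 : R₁ ∩ B = R₂ ∩ B := congrArg Prod.fst h
    have h2 : R₁ \ B = R₂ \ B := congrArg Prod.snd h
    rw [← Finset.sdiff_union_inter R₁ B, ← Finset.sdiff_union_inter R₂ B, h1, h2]

lemma event_bound {V : Type} [DecidableEq V] (γ : ℝ) (hγ0 : 0 < γ)
    (U B : Finset V) (hBU : B ⊆ U) (r : ℕ) (θ : ℝ) (bstar : ℝ)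
    (hb : (B.card : ℝ) ≤ bstar) :
    (((U.powersetCard r).filter (fun R => θ < ((R ∩ B).card : ℝ))).card : ℝ)
      * (r.factorial : ℝ) * (1 + γ/2) ^ θ
      ≤ ((U.card : ℝ) + (γ/2) * bstar) ^ r := by
  set lam : ℝ := 1 + γ/2 with hlam_def
  have hlam1 : (1:ℝ) ≤ lam := by simp [hlam_def]; positivity
  have hlam0 : (0:ℝ) < lam := lt_of_lt_of_le one_pos hlam1
  set c : ℕ := (U \ B).card with hc_def
  have hbc : c + B.card = U.card := by
    have h1 := Finset.card_sdiff_of_subset hBU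
    have h2 := Finset.card_le_card hBU
    omega
  set S : Finset ℕ := (Finset.range (r+1)).filter (fun j => θ < (j:ℝ)) with hS_def
  -- step 1 : Nat bound on bad count
  have step1 : ((U.powersetCard r).filter (fun R => θ < ((R ∩ B).card : ℝ))).card ≤
      ∑ j ∈ S, B.card.choose j * c.choose (r - j) := by
    calc ((U.powersetCard r).filter (fun R => θ < ((R ∩ B).card : ℝ))).card
        ≤ (S.biUnion (fun j => (U.powersetCard r).filter (fun R => (R ∩ B).card = j))).card := by
          apply Finset.card_le_card
          intro R hR
          simp only [Finset.mem_filter] at hR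
          obtain ⟨hT, hθ⟩ := hR
          have hRr : R.card = r := (Finset.mem_powersetCard.mp hT).2
          have hle : (R ∩ B).card ≤ r := hRr ▸ Finset.card_le_card Finset.inter_subset_left
          refine Finset.mem_biUnion.mpr ⟨(R ∩ B).card, ?_, ?_⟩
          · simp only [hS_def, Finset.mem_filter, Finset.mem_range]
            exact ⟨by omega, hθ⟩
          · exact Finset.mem_filter.mpr ⟨hT, rfl⟩
      _ ≤ ∑ j ∈ S, ((U.powersetCard r).filter (fun R => (R ∩ B).card = j)).card :=
          Finset.card_biUnion_le
      _ ≤ ∑ j ∈ S, B.card.choose j * c.choose (r - j) :=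
          Finset.sum_le_sum (fun j _ => count_le U B r j)
  -- step 2 : per-term real bound
  have step2 : ∀ j ∈ S, (B.card.choose j * c.choose (r-j) : ℝ) * (r.factorial : ℝ) * lam ^ θ
      ≤ (r.choose j : ℝ) * (lam * B.card) ^ j * (c:ℝ) ^ (r - j) := by
    intro j hj
    simp only [hS_def, Finset.mem_filter, Finset.mem_range] at hj
    obtain ⟨hjr', hθj⟩ := hj
    have hjr : j ≤ r := by omega
    have hfact : (r.choose j) * j.factorial * (r-j).factorial = r.factorial :=
      Nat.choose_mul_factorial_mul_factorial hjr
    have h1 : (B.card.choose j) * j.factorial ≤ B.card ^ j := by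
      rw [mul_comm, ← Nat.descFactorial_eq_factorial_mul_choose]
      exact Nat.descFactorial_le_pow _ _
    have h2 : (c.choose (r-j)) * (r-j).factorial ≤ c ^ (r-j) := by
      rw [mul_comm, ← Nat.descFactorial_eq_factorial_mul_choose]
      exact Nat.descFactorial_le_pow _ _
    have hlamθ : lam ^ θ ≤ lam ^ j := by
      rw [← Real.rpow_natCast lam j]
      exact Real.rpow_le_rpow_of_exponent_le hlam1 hθj.le
    have hnat : (B.card.choose j * c.choose (r-j) : ℝ) * (r.factorial : ℝ)
        ≤ (r.choose j : ℝ) * (B.card:ℝ) ^ j * (c:ℝ) ^ (r-j) := by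
      have : (B.card.choose j * c.choose (r-j)) * r.factorial
          ≤ r.choose j * B.card ^ j * c ^ (r-j) := by
        calc (B.card.choose j * c.choose (r-j)) * r.factorial
            = (r.choose j) * ((B.card.choose j) * j.factorial)
              * ((c.choose (r-j)) * (r-j).factorial) := by rw [← hfact]; ring
          _ ≤ r.choose j * B.card ^ j * c ^ (r-j) := by
              exact Nat.mul_le_mul (Nat.mul_le_mul_left _ h1) h2
      exact_mod_cast this
    have hpos : (0:ℝ) ≤ (B.card.choose j * c.choose (r-j) : ℝ) * (r.factorial : ℝ) :=
      by positivity
    calc (B.card.choose j * c.choose (r-j) : ℝ) * (r.factorial : ℝ) * lam ^ θ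
        ≤ ((r.choose j : ℝ) * (B.card:ℝ) ^ j * (c:ℝ) ^ (r-j)) * lam ^ j := by
          apply mul_le_mul hnat hlamθ (Real.rpow_nonneg hlam0.le θ) (by positivity)
      _ = (r.choose j : ℝ) * (lam * B.card) ^ j * (c:ℝ) ^ (r - j) := by
          rw [mul_pow]; ring
  -- assemble
  have hcast : (((U.powersetCard r).filter (fun R => θ < ((R ∩ B).card : ℝ))).card : ℝ)
      ≤ ∑ j ∈ S, (B.card.choose j * c.choose (r - j) : ℝ) := by
    exact_mod_cast step1
  have hsum : ∑ j ∈ S, (r.choose j : ℝ) * (lam * B.card) ^ j * (c:ℝ) ^ (r - j)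
      ≤ (lam * B.card + c) ^ r := by
    calc ∑ j ∈ S, (r.choose j : ℝ) * (lam * B.card) ^ j * (c:ℝ) ^ (r - j)
        = ∑ j ∈ S, (lam * (B.card:ℝ)) ^ j * (c:ℝ) ^ (r - j) * (r.choose j) :=
          Finset.sum_congr rfl (fun j _ => by ring)
      _ ≤ ∑ j ∈ Finset.range (r+1), (lam * (B.card:ℝ)) ^ j * (c:ℝ) ^ (r - j) * (r.choose j) := by
          apply Finset.sum_le_sum_of_subset_of_nonneg (Finset.filter_subset _ _)
          intro j hj _
          have h0 : (0:ℝ) ≤ lam * B.card := by positivity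
          positivity
      _ = (lam * B.card + c) ^ r := (add_pow _ _ _).symm
  have hbase : lam * B.card + (c:ℝ) ≤ (U.card : ℝ) + (γ/2) * bstar := by
    have h1 : ((c:ℝ) + B.card) = (U.card:ℝ) := by exact_mod_cast hbc
    have h2 : (γ/2) * (B.card:ℝ) ≤ (γ/2) * bstar :=
      mul_le_mul_of_nonneg_left hb (by positivity)
    simp only [hlam_def]; nlinarith
  have hbase0 : (0:ℝ) ≤ lam * B.card + (c:ℝ) := by positivity
  calc (((U.powersetCard r).filter (fun R => θ < ((R ∩ B).card : ℝ))).card : ℝ)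
      * (r.factorial : ℝ) * lam ^ θ
      ≤ (∑ j ∈ S, (B.card.choose j * c.choose (r - j) : ℝ)) * (r.factorial : ℝ) * lam ^ θ := by
        apply mul_le_mul_of_nonneg_right _ (Real.rpow_nonneg hlam0.le θ)
        exact mul_le_mul_of_nonneg_right hcast (by positivity)
    _ = ∑ j ∈ S, (B.card.choose j * c.choose (r - j) : ℝ) * (r.factorial : ℝ) * lam ^ θ := by
        rw [Finset.sum_mul, Finset.sum_mul]
    _ ≤ ∑ j ∈ S, (r.choose j : ℝ) * (lam * B.card) ^ j * (c:ℝ) ^ (r - j) :=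
        Finset.sum_le_sum step2
    _ ≤ (lam * B.card + c) ^ r := hsum
    _ ≤ ((U.card : ℝ) + (γ/2) * bstar) ^ r := pow_le_pow_left₀ hbase0 hbase r

lemma polyE (γ : ℝ) (hγ0 : 0 < γ) (hγ1 : γ ≤ 1/6) :
    γ^7 + γ/6 - γ^2/2 ≤ (γ/6 - 11/25 * γ^2) * (1 - γ/4 - γ^7) := by
  have h5 : γ^5 ≤ (1/6:ℝ)^5 := pow_le_pow_left₀ hγ0.le hγ1 5
  nlinarith [pow_nonneg hγ0.le 5, pow_nonneg hγ0.le 7, pow_nonneg hγ0.le 2,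
    mul_le_mul_of_nonneg_left h5 (pow_nonneg hγ0.le 2),
    mul_le_mul_of_nonneg_left h5 (pow_nonneg hγ0.le 3),
    mul_le_mul_of_nonneg_left h5 (pow_nonneg hγ0.le 4)]

set_option maxHeartbeats 1000000 in
lemma num_ineq (γ : ℝ) (hγ0 : 0 < γ) (hγ1 : γ ≤ 1/6)
    (n m b : ℝ) (r : ℕ)
    (hn : 16 / (γ^9/20)^2 ≤ n)
    (hb0 : 0 ≤ b) (hb : b ≤ (1/3 - γ) * n)
    (hm : (1 - γ/4) * n ≤ m)
    (hr1 : γ^7 * n / 2 ≤ (r:ℝ)) (hr2 : (r:ℝ) ≤ γ^7 * n) :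
    2 * n * (m + (γ/2) * b) ^ r <
      (1 + γ/2) ^ ((r:ℝ) - (2/3 + γ/2) * ((r:ℝ) + 4)) * (m - r) ^ r := by
  set a : ℝ := γ^9/20 with ha_def
  have ha : 0 < a := by rw [ha_def]; positivity
  have han : a * n = γ^9 * n / 20 := by rw [ha_def]; ring
  have hn' : 16 / a^2 ≤ n := hn
  clear_value a
  clear hn
  have hn0 : 0 < n := lt_of_lt_of_le (by positivity) hn'
  have hγle1 : γ ≤ 1 := by linarith
  have hγ7 : γ^7 ≤ γ := by
    calc γ^7 = γ * γ^6 := by ring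
    _ ≤ γ * 1 := by
        apply mul_le_mul_of_nonneg_left _ hγ0.le
        exact pow_le_one₀ hγ0.le hγle1
    _ = γ := by ring
  -- quantities
  set De : ℝ := 1 - γ/4 - γ^7 with hDe_def
  set Nu : ℝ := γ^7 + γ/6 - γ^2/2 with hNu_def
  set E : ℝ := Nu / De with hE_def
  have hDe : 0 < De := by rw [hDe_def]; linarith
  have hmr : De * n ≤ m - r := by rw [hDe_def]; nlinarith
  have hNu0 : 0 ≤ Nu := by rw [hNu_def]; nlinarith
  have hE0 : 0 ≤ E := by rw [hE_def]; exact div_nonneg hNu0 hDe.le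
  have hDeNuE : De * n * E = Nu * n := by
    rw [hE_def]; field_simp
  have hEub : E ≤ γ/6 - 11/25 * γ^2 := by
    rw [hE_def, div_le_iff₀ hDe, hNu_def, hDe_def]
    exact polyE γ hγ0 hγ1
  have hNun : (r:ℝ) + (γ/2) * b ≤ Nu * n := by rw [hNu_def]; nlinarith
  clear_value De Nu E
  clear hDe_def hNu_def hE_def
  have hmr0 : 0 < m - r := lt_of_lt_of_le (by positivity) hmr
  -- base comparison
  have hbase : m + (γ/2) * b ≤ (m - r) * (1 + E) := by
    have h1 : (m - r) * E ≥ De * n * E := mul_le_mul_of_nonneg_right hmr hE0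
    have h4 : (m - r) * (1 + E) = (m - r) + (m - r) * E := by ring
    linarith
  have hbase0 : 0 ≤ m + (γ/2) * b := by nlinarith
  have hpow : (m + (γ/2) * b) ^ r ≤ (m - r) ^ r * Real.exp (r * E) := by
    calc (m + (γ/2) * b) ^ r ≤ ((m - r) * (1 + E)) ^ r := pow_le_pow_left₀ hbase0 hbase r
      _ = (m - r) ^ r * (1 + E) ^ r := mul_pow _ _ _
      _ ≤ (m - r) ^ r * Real.exp E ^ r := by
          apply mul_le_mul_of_nonneg_left _ (by positivity)
          apply pow_le_pow_left₀ (by linarith) _ r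
          linarith [Real.add_one_le_exp E]
      _ = (m - r) ^ r * Real.exp (r * E) := by rw [Real.exp_nat_mul]
  -- log bounds
  set lam : ℝ := 1 + γ/2 with hlam_def
  have hlam0 : (0:ℝ) < lam := by rw [hlam_def]; linarith
  set L : ℝ := Real.log lam with hL_def
  have hLub : L ≤ γ/2 := by
    have := Real.log_le_sub_one_of_pos hlam0
    rw [← hL_def] at this
    rw [hlam_def] at this; linarith
  have hLlb : γ/2 - γ^2/4 ≤ L := by
    have h1 : 1 - lam⁻¹ ≤ L := by
      have := Real.one_sub_inv_le_log_of_pos hlam0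
      rw [← hL_def] at this; exact this
    have hinv : lam * lam⁻¹ = 1 := mul_inv_cancel₀ hlam0.ne'
    have hinv0 : (0:ℝ) < lam⁻¹ := inv_pos.mpr hlam0
    have h2 : lam⁻¹ ≤ 1 - γ/2 + γ^2/4 := by
      have hmul : lam * (1 - γ/2 + γ^2/4) = 1 + γ^3/8 := by rw [hlam_def]; ring
      nlinarith
    linarith
  have hL0 : 0 ≤ L := by nlinarith
  set θ : ℝ := (r:ℝ) - (2/3 + γ/2) * ((r:ℝ) + 4) with hθ_def
  have hθL : θ * L ≥ (r:ℝ) * (γ/6 - γ^2/3) - 1/4 := by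
    have hθeq : θ = (1/3 - γ/2) * r - (8/3 + 2*γ) := by rw [hθ_def]; ring
    have hc1 : (0:ℝ) ≤ 1/3 - γ/2 := by linarith
    have h1 : (1/3 - γ/2) * L ≥ γ/6 - γ^2/3 := by nlinarith
    have h2 : (8/3 + 2*γ) * L ≤ 1/4 := by nlinarith
    have hr0 : (0:ℝ) ≤ (r:ℝ) := Nat.cast_nonneg r
    calc θ * L = (r:ℝ) * ((1/3 - γ/2) * L) - (8/3 + 2*γ) * L := by rw [hθeq]; ring
      _ ≥ (r:ℝ) * (γ/6 - γ^2/3) - 1/4 := by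
          have := mul_le_mul_of_nonneg_left h1 hr0
          linarith
  clear_value θ L
  -- sqrt bound on log
  set s : ℝ := Real.sqrt (2*n) with hs_def
  have hs2 : s^2 = 2*n := Real.sq_sqrt (by positivity)
  have hs0 : 0 < s := by rw [hs_def]; exact Real.sqrt_pos.mpr (by positivity)
  have hsa : 5 ≤ a * s := by
    have h1 : (5/a)^2 ≤ 2*n := by
      have h2 : (5/a)^2 = 25/a^2 := by field_simp; norm_num
      rw [h2]
      calc 25/a^2 ≤ 32/a^2 := by gcongr <;> norm_num
        _ = 2 * (16/a^2) := by ring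
        _ ≤ 2*n := by linarith
    have h3 : 5/a ≤ s := by
      rw [hs_def, show (5/a : ℝ) = Real.sqrt ((5/a)^2) from (Real.sqrt_sq (by positivity)).symm]
      exact Real.sqrt_le_sqrt h1
    calc (5:ℝ) = a * (5/a) := by field_simp
      _ ≤ a * s := mul_le_mul_of_nonneg_left h3 ha.le
  have hlogn : Real.log (2*n) ≤ 2*s - 2 := by
    have h1 : Real.log s = Real.log (2*n) / 2 := by rw [hs_def]; exact Real.log_sqrt (by positivity)
    have h2 : Real.log s ≤ s - 1 := Real.log_le_sub_one_of_pos hs0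
    linarith
  clear_value s
  -- key strict inequality in exponents
  have hkey : Real.log (2*n) + (r:ℝ) * E < L * θ := by
    have h1 : (r:ℝ) * E ≤ (r:ℝ) * (γ/6 - 11/25 * γ^2) :=
      mul_le_mul_of_nonneg_left hEub (Nat.cast_nonneg r)
    have h2 : a * n ≤ (r:ℝ) * (8/75 * γ^2) := by
      have h2a : (γ^7 * n / 2) * (8/75 * γ^2) ≤ (r:ℝ) * (8/75 * γ^2) :=
        mul_le_mul_of_nonneg_right hr1 (by positivity)
      have h2b : γ^7 * n / 2 * (8/75 * γ^2) = 4/75 * (γ^9 * n) := by ring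
      have h2c : a * n = 1/20 * (γ^9 * n) := by rw [han]; ring
      have h2d : 0 ≤ γ^9 * n := by positivity
      linarith
    have hss : s * s = 2 * n := by rw [← sq]; exact hs2
    have h4a : 5 * s ≤ a * s * s := mul_le_mul_of_nonneg_right hsa hs0.le
    have h4c : a * s * s = 2 * (a * n) := by rw [mul_assoc, hss]; ring
    have hLθ : L * θ = θ * L := mul_comm L θ
    linarith
  -- conclude
  have hexp : 2 * n * Real.exp ((r:ℝ) * E) < lam ^ θ := by
    have e1 : lam ^ θ = Real.exp (L * θ) := by
      rw [hL_def]
      exact Real.rpow_def_of_pos hlam0 θ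
    have e2 : 2 * n * Real.exp ((r:ℝ)*E) = Real.exp (Real.log (2*n) + (r:ℝ)*E) := by
      rw [Real.exp_add, Real.exp_log (by positivity)]
    rw [e1, e2]
    exact Real.exp_lt_exp.mpr hkey
  calc 2 * n * (m + (γ/2) * b) ^ r ≤ 2 * n * ((m - r) ^ r * Real.exp (r * E)) := by
        apply mul_le_mul_of_nonneg_left hpow (by positivity)
    _ = (2 * n * Real.exp ((r:ℝ) * E)) * (m - r) ^ r := by ring
    _ < lam ^ θ * (m - r) ^ r := by
        apply mul_lt_mul_of_pos_right hexp (by positivity)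

/-- Reservoir Lemma: For `0 < γ ≤ 1/6` and `n` sufficiently large,
every digraph on `n` vertices with minimum semi-degree at least `(2/3 + γ)n` and
every `W` with `|W| ≤ γn/4` admits a reservoir `R ⊆ V \ W` with `|R| = ⌈γ⁷n/2⌉`
such that every vertex has at least `(2/3 + γ/2)(|R|+4)` out- and in-neighbours in `R`. -/
theorem stmt_12 (γ : ℝ) (hγ0 : 0 < γ) (hγ1 : γ ≤ 1/6) :
    ∃ n₀ : ℕ, ∀ (V : Type) [Fintype V] [DecidableEq V] (A : V → V → Prop) [DecidableRel A],
      n₀ ≤ Fintype.card V →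
      (∀ v : V,
        (2/3 + γ) * (Fintype.card V : ℝ) ≤
          min ((Finset.univ.filter (fun u => A v u)).card : ℝ)
              ((Finset.univ.filter (fun u => A u v)).card : ℝ)) →
      ∀ W : Finset V, (W.card : ℝ) ≤ γ * (Fintype.card V : ℝ) / 4 →
      ∃ R : Finset V, Disjoint R W ∧ R.card = ⌈γ^7 * (Fintype.card V : ℝ) / 2⌉₊ ∧
        ∀ x : V,
          (2/3 + γ/2) * ((R.card : ℝ) + 4) ≤ ((R.filter (fun y => A x y)).card : ℝ) ∧
          (2/3 + γ/2) * ((R.card : ℝ) + 4) ≤ ((R.filter (fun y => A y x)).card : ℝ) := by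
  refine ⟨⌈16 / (γ^9/20)^2⌉₊ + ⌈2/γ^7⌉₊, ?_⟩
  intro V _ _ A _ hcard hdeg W hW
  set n := Fintype.card V with hn_def
  -- largeness facts
  have hn16 : 16 / (γ^9/20)^2 ≤ (n:ℝ) := by
    refine le_trans (Nat.le_ceil _) ?_
    exact_mod_cast Nat.le_of_add_right_le hcard
  have hn2γ : 2/γ^7 ≤ (n:ℝ) := by
    refine le_trans (Nat.le_ceil _) ?_
    have : ⌈2/γ^7⌉₊ ≤ n := by omega
    exact_mod_cast this
  have hn0 : 0 < (n:ℝ) := lt_of_lt_of_le (by positivity) hn16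
  have hγ70 : 0 < γ^7 := by positivity
  have h2γn : 2 ≤ γ^7 * (n:ℝ) := by
    rw [div_le_iff₀ hγ70] at hn2γ; linarith [hn2γ]
  -- the reservoir size
  set r : ℕ := ⌈γ^7 * (n:ℝ) / 2⌉₊ with hr_def
  have hr1 : γ^7 * (n:ℝ) / 2 ≤ (r:ℝ) := Nat.le_ceil _
  have hr2 : (r:ℝ) ≤ γ^7 * (n:ℝ) := by
    have := Nat.ceil_lt_add_one (show (0:ℝ) ≤ γ^7 * n / 2 by positivity)
    rw [← hr_def] at this
    linarith
  -- the ground set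
  set U : Finset V := Finset.univ \ W with hU_def
  have hWle : W.card ≤ n := by rw [hn_def, ← Finset.card_univ]; exact Finset.card_le_card (Finset.subset_univ W)
  have hUm : (U.card : ℝ) = (n:ℝ) - W.card := by
    rw [hU_def, Finset.card_sdiff_of_subset (Finset.subset_univ W), Finset.card_univ, ← hn_def]
    rw [Nat.cast_sub hWle]
  have hm : (1 - γ/4) * (n:ℝ) ≤ U.card := by rw [hUm]; linarith
  have hγ7γ : γ^7 ≤ γ := by
    calc γ^7 = γ * γ^6 := by ring
    _ ≤ γ * 1 := by
        apply mul_le_mul_of_nonneg_left _ hγ0.le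
        exact pow_le_one₀ hγ0.le (by linarith)
    _ = γ := by ring
  have hrm : r ≤ U.card := by
    have h1 : γ^7 * (n:ℝ) ≤ γ * n := mul_le_mul_of_nonneg_right hγ7γ hn0.le
    have h2 : (0:ℝ) ≤ (1 - 5*γ/4) * n := mul_nonneg (by linarith) hn0.le
    have : (r:ℝ) ≤ (U.card : ℝ) := by nlinarith
    exact_mod_cast this
  -- parameters
  set θ : ℝ := (r:ℝ) - (2/3 + γ/2) * ((r:ℝ) + 4) with hθ_def
  set lam : ℝ := 1 + γ/2 with hlam_def
  have hlam0 : (0:ℝ) < lam := by rw [hlam_def]; linarith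
  set bstar : ℝ := (1/3 - γ) * n with hbstar_def
  have hbstar0 : 0 ≤ bstar := by rw [hbstar_def]; nlinarith
  -- neighbourhood complements are small
  have hBbound : ∀ (N : Finset V), (2/3 + γ) * (n:ℝ) ≤ N.card →
      ((U \ N).card : ℝ) ≤ bstar := by
    intro N hN
    have h1 : U \ N ⊆ Finset.univ \ N := Finset.sdiff_subset_sdiff (Finset.subset_univ U) le_rfl
    have h2 : ((Finset.univ \ N).card : ℝ) = (n:ℝ) - N.card := by
      rw [Finset.card_sdiff_of_subset (Finset.subset_univ N), Finset.card_univ, ← hn_def,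
        Nat.cast_sub (by rw [hn_def, ← Finset.card_univ]; exact Finset.card_le_card (Finset.subset_univ N))]
    have h3 : ((U \ N).card : ℝ) ≤ ((Finset.univ \ N).card : ℝ) := by
      exact_mod_cast Finset.card_le_card h1
    rw [hbstar_def]; rw [h2] at h3; linarith
  -- bad sets
  set T : Finset (Finset V) := U.powersetCard r with hT_def
  set Bp : V → Finset V := fun x => U \ (Finset.univ.filter (fun u => A x u)) with hBp_def
  set Bm : V → Finset V := fun x => U \ (Finset.univ.filter (fun u => A u x)) with hBm_def
  set Bad : Finset (Finset V) := T.filter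
    (fun R => ∃ x, θ < ((R ∩ Bp x).card : ℝ) ∨ θ < ((R ∩ Bm x).card : ℝ)) with hBad_def
  -- counting bound
  have hbadcount : Bad.card ≤ ∑ x : V,
      ((T.filter (fun R => θ < ((R ∩ Bp x).card : ℝ))).card +
       (T.filter (fun R => θ < ((R ∩ Bm x).card : ℝ))).card) := by
    calc Bad.card ≤ (Finset.univ.biUnion (fun x =>
          T.filter (fun R => θ < ((R ∩ Bp x).card : ℝ)) ∪
          T.filter (fun R => θ < ((R ∩ Bm x).card : ℝ)))).card := by
          apply Finset.card_le_card
          intro R hR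
          rw [hBad_def, Finset.mem_filter] at hR
          obtain ⟨hT', x, hx⟩ := hR
          refine Finset.mem_biUnion.mpr ⟨x, Finset.mem_univ x, ?_⟩
          rcases hx with h | h
          · exact Finset.mem_union_left _ (Finset.mem_filter.mpr ⟨hT', h⟩)
          · exact Finset.mem_union_right _ (Finset.mem_filter.mpr ⟨hT', h⟩)
      _ ≤ ∑ x : V, (T.filter (fun R => θ < ((R ∩ Bp x).card : ℝ)) ∪
          T.filter (fun R => θ < ((R ∩ Bm x).card : ℝ))).card := Finset.card_biUnion_le
      _ ≤ _ := Finset.sum_le_sum (fun x _ => Finset.card_union_le _ _)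
  -- real bound on bad count
  have hP : ∀ x : V, ((T.filter (fun R => θ < ((R ∩ Bp x).card : ℝ))).card : ℝ)
      * (r.factorial : ℝ) * lam ^ θ ≤ ((U.card : ℝ) + (γ/2) * bstar) ^ r := by
    intro x
    rw [hT_def, hlam_def]
    apply event_bound γ hγ0 U _ Finset.sdiff_subset r θ bstar
    apply hBbound
    exact le_trans (hdeg x) (min_le_left _ _)
  have hM : ∀ x : V, ((T.filter (fun R => θ < ((R ∩ Bm x).card : ℝ))).card : ℝ)
      * (r.factorial : ℝ) * lam ^ θ ≤ ((U.card : ℝ) + (γ/2) * bstar) ^ r := by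
    intro x
    rw [hT_def, hlam_def]
    apply event_bound γ hγ0 U _ Finset.sdiff_subset r θ bstar
    apply hBbound
    exact le_trans (hdeg x) (min_le_right _ _)
  -- lower bound on total count
  have hTcard : ((U.card : ℝ) - r) ^ r ≤ (T.card : ℝ) * r.factorial := by
    have h1 : (U.card - r)^r ≤ r.factorial * (U.card).choose r := by
      calc (U.card - r)^r ≤ (U.card + 1 - r)^r := by
            apply Nat.pow_le_pow_left; omega
        _ ≤ (U.card).descFactorial r := Nat.pow_sub_le_descFactorial _ _
        _ = r.factorial * (U.card).choose r := Nat.descFactorial_eq_factorial_mul_choose _ _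
    have h2 : ((U.card : ℝ) - r) = ((U.card - r : ℕ) : ℝ) := by
      rw [Nat.cast_sub hrm]
    rw [h2, hT_def, Finset.card_powersetCard]
    calc (((U.card - r : ℕ) : ℝ)) ^ r = (((U.card - r)^r : ℕ) : ℝ) := by push_cast; ring
      _ ≤ ((r.factorial * (U.card).choose r : ℕ) : ℝ) := by exact_mod_cast h1
      _ = ((U.card).choose r : ℝ) * r.factorial := by push_cast; ring
  -- the strict inequality
  have hnum : 2 * (n:ℝ) * ((U.card : ℝ) + (γ/2) * bstar) ^ r <
      lam ^ θ * ((U.card : ℝ) - r) ^ r := by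
    exact num_ineq γ hγ0 hγ1 n U.card bstar r hn16 hbstar0 hbstar_def.le hm hr1 hr2
  -- conclude Bad.card < T.card
  have hpos : (0:ℝ) < (r.factorial : ℝ) * lam ^ θ := by
    apply mul_pos (by exact_mod_cast Nat.factorial_pos r) (Real.rpow_pos_of_pos hlam0 θ)
  have hfinal : (Bad.card : ℝ) * ((r.factorial : ℝ) * lam ^ θ) <
      (T.card : ℝ) * ((r.factorial : ℝ) * lam ^ θ) := by
    calc (Bad.card : ℝ) * ((r.factorial : ℝ) * lam ^ θ)
        ≤ ((∑ x : V, ((T.filter (fun R => θ < ((R ∩ Bp x).card : ℝ))).card +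
            (T.filter (fun R => θ < ((R ∩ Bm x).card : ℝ))).card) : ℕ) : ℝ)
            * ((r.factorial : ℝ) * lam ^ θ) := by
          apply mul_le_mul_of_nonneg_right _ hpos.le
          exact_mod_cast hbadcount
      _ = ∑ x : V, (((T.filter (fun R => θ < ((R ∩ Bp x).card : ℝ))).card : ℝ)
            * (r.factorial : ℝ) * lam ^ θ +
            ((T.filter (fun R => θ < ((R ∩ Bm x).card : ℝ))).card : ℝ)
            * (r.factorial : ℝ) * lam ^ θ) := by
          push_cast
          rw [Finset.sum_mul]
          apply Finset.sum_congr rfl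
          intro x _
          ring
      _ ≤ ∑ x : V, (((U.card : ℝ) + (γ/2) * bstar) ^ r + ((U.card : ℝ) + (γ/2) * bstar) ^ r) :=
          Finset.sum_le_sum (fun x _ => add_le_add (hP x) (hM x))
      _ = 2 * (n:ℝ) * ((U.card : ℝ) + (γ/2) * bstar) ^ r := by
          rw [Finset.sum_const, Finset.card_univ, ← hn_def]
          push_cast
          ring
      _ < lam ^ θ * ((U.card : ℝ) - r) ^ r := hnum
      _ ≤ lam ^ θ * ((T.card : ℝ) * r.factorial) := by
          apply mul_le_mul_of_nonneg_left hTcard (Real.rpow_pos_of_pos hlam0 θ).le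
      _ = (T.card : ℝ) * ((r.factorial : ℝ) * lam ^ θ) := by ring
  have hcardlt : Bad.card < T.card := by
    have := lt_of_mul_lt_mul_right hfinal hpos.le
    exact_mod_cast this
  -- extract a good reservoir
  have hBT : Bad ⊆ T := by rw [hBad_def]; exact Finset.filter_subset _ _
  have hne : (T \ Bad).Nonempty := by
    rw [← Finset.card_pos, Finset.card_sdiff_of_subset hBT]
    omega
  obtain ⟨R, hR⟩ := hne
  rw [Finset.mem_sdiff] at hR
  obtain ⟨hRT, hRBad⟩ := hR
  rw [hT_def, Finset.mem_powersetCard] at hRT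
  obtain ⟨hRU, hRr⟩ := hRT
  have hRgood : ∀ x : V, ((R ∩ Bp x).card : ℝ) ≤ θ ∧ ((R ∩ Bm x).card : ℝ) ≤ θ := by
    intro x
    rw [hBad_def, Finset.mem_filter] at hRBad
    push_neg at hRBad
    have := hRBad (by rw [hT_def, Finset.mem_powersetCard]; exact ⟨hRU, hRr⟩) x
    exact this
  -- final counting per vertex
  have hkey : ∀ (N : Finset V), ((R ∩ (U \ N)).card : ℝ) ≤ θ →
      (2/3 + γ/2) * ((R.card : ℝ) + 4) ≤ ((R ∩ N).card : ℝ) := by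
    intro N hθN
    have h1 : R ∩ (U \ N) = R \ N := by
      rw [← Finset.inter_sdiff_assoc, Finset.inter_eq_left.mpr hRU]
    have h2 : (R \ N).card + (R ∩ N).card = R.card := Finset.card_sdiff_add_card_inter R N
    rw [h1] at hθN
    have h3 : ((R \ N).card : ℝ) + ((R ∩ N).card : ℝ) = (R.card : ℝ) := by exact_mod_cast h2
    have hθval : θ = (r:ℝ) - (2/3 + γ/2) * ((r:ℝ) + 4) := hθ_def
    rw [hRr] at h3
    rw [hRr]
    clear_value θ
    linarith [hθN, h3, hθval]
  refine ⟨R, ?_, hRr, ?_⟩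
  · rw [Finset.disjoint_left]
    intro a haR haW
    have := hRU haR
    rw [hU_def, Finset.mem_sdiff] at this
    exact this.2 haW
  · intro x
    constructor
    · have heq : R.filter (fun y => A x y) = R ∩ (Finset.univ.filter (fun u => A x u)) := by
        ext y
        simp [Finset.mem_filter, Finset.mem_inter]
      rw [heq]
      exact hkey _ (hRgood x).1
    · have heq : R.filter (fun y => A y x) = R ∩ (Finset.univ.filter (fun u => A u x)) := by
        ext y
        simp [Finset.mem_filter, Finset.mem_inter]
      rw [heq]
      exact hkey _ (hRgood x).2
end

section
/- Let R be a digraph (the reduced digraph) obtained from applying the degree form of the Diregularity lemma with parameters ε, d to a digraph D. Then δ⁰(R) ≥ (δ⁰(D)/|D| − d − 2ε)·|R|. -/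
open Finset
open scoped Classical


lemma stmt_17_aux (V : Type*) [Fintype V] [DecidableEq V]
    (D' : V → V → Prop) [DecidableRel D']
    (ε d δ : ℝ) (hε : 0 ≤ ε) (hd : 0 ≤ d)
    (k m : ℕ) (V₀ : Finset V) (Vp : Fin k → Finset V)
    (hpart : ∀ x : V, x ∈ V₀ ∨ ∃ i, x ∈ Vp i)
    (hdisj : ∀ i j, i ≠ j → Disjoint (Vp i) (Vp j))
    (hV₀ : (V₀.card : ℝ) ≤ ε * (Fintype.card V : ℝ))
    (hm : ∀ i, (Vp i).card = m)
    (hempty : ∀ i, ∀ x ∈ Vp i, ∀ y ∈ Vp i, ¬ D' x y)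
    (hdeg : ∀ v : V, δ ≤ ((Finset.univ.filter (fun u => D' v u)).card : ℝ) + (d + ε) * (Fintype.card V : ℝ))
    (hδn : ∀ v : V, δ ≤ (Fintype.card V : ℝ))
    (R : Fin k → Fin k → Prop)
    (hR : ∀ i j, R i j ↔ i ≠ j ∧ ∃ x ∈ Vp i, ∃ y ∈ Vp j, D' x y)
    (i : Fin k) :
    (δ / (Fintype.card V : ℝ) - d - 2*ε) * (k : ℝ) ≤
      ((Finset.univ.filter (fun j => R i j)).card : ℝ) := by
  set n := Fintype.card V with hn
  by_cases hc : δ / (n : ℝ) - d - 2*ε ≤ 0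
  · exact le_trans (mul_nonpos_of_nonpos_of_nonneg hc (Nat.cast_nonneg k))
      (Nat.cast_nonneg _)
  push_neg at hc
  -- n > 0
  have hn0 : 0 < n := by
    rcases Nat.eq_zero_or_pos n with h | h
    · rw [h] at hc; simp at hc; nlinarith
    · exact h
  have hnR : (0:ℝ) < n := by exact_mod_cast hn0
  -- m > 0
  have hm0 : 0 < m := by
    rcases Nat.eq_zero_or_pos m with h | h
    · exfalso
      have huniv : (Finset.univ : Finset V) ⊆ V₀ := by
        intro x _
        rcases hpart x with hx | ⟨j, hj⟩
        · exact hx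
        · exfalso
          have := hm j
          rw [h] at this
          exact absurd hj (by simp [Finset.card_eq_zero.mp this])
      have : (n : ℝ) ≤ ε * n := by
        calc (n : ℝ) = ((Finset.univ : Finset V).card : ℝ) := by simp [hn]
        _ ≤ (V₀.card : ℝ) := by exact_mod_cast Finset.card_le_card huniv
        _ ≤ ε * n := hV₀
      have hε1 : 1 ≤ ε := by nlinarith
      obtain ⟨v⟩ : Nonempty V := Fintype.card_pos_iff.mp hn0
      have hδ := hδn v
      have : δ / n ≤ 1 := by rw [div_le_one hnR]; exact hδ
      nlinarith
    · exact h
  obtain ⟨x, hx⟩ : ∃ x, x ∈ Vp i := by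
    have := hm i
    rcases Finset.card_pos.mp (by omega : 0 < (Vp i).card) with ⟨x, hx⟩
    exact ⟨x, hx⟩
  set deg := (Finset.univ.filter (fun j => R i j)).card with hdegdef
  -- counting
  have hAB : (Finset.univ.filter (fun u => D' x u)) ⊆
      V₀ ∪ (Finset.univ.filter (fun j => R i j)).biUnion Vp := by
    intro u hu
    simp only [Finset.mem_filter, Finset.mem_univ, true_and] at hu
    rcases hpart u with h | ⟨j, hj⟩
    · exact Finset.mem_union_left _ h
    · refine Finset.mem_union_right _ (Finset.mem_biUnion.2 ⟨j, ?_, hj⟩)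
      simp only [Finset.mem_filter, Finset.mem_univ, true_and]
      rw [hR]
      refine ⟨?_, x, hx, u, hj, hu⟩
      rintro rfl
      exact hempty i x hx u hj hu
  have hBcard : ((Finset.univ.filter (fun j => R i j)).biUnion Vp).card ≤ deg * m := by
    calc ((Finset.univ.filter (fun j => R i j)).biUnion Vp).card
        ≤ ∑ j ∈ (Finset.univ.filter (fun j => R i j)), (Vp j).card :=
          Finset.card_biUnion_le
      _ = deg * m := by simp [hm, hdegdef]
  have hA : ((Finset.univ.filter (fun u => D' x u)).card : ℝ) ≤ (V₀.card : ℝ) + (deg : ℝ) * m := by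
    have h1 := Finset.card_le_card hAB
    have h2 := Finset.card_union_le V₀ ((Finset.univ.filter (fun j => R i j)).biUnion Vp)
    have : (Finset.univ.filter (fun u => D' x u)).card ≤ V₀.card + deg * m := by omega
    exact_mod_cast this
  have h1 : δ - (d + ε) * n ≤ ε * n + (deg : ℝ) * m := by
    have := hdeg x
    linarith [hV₀]
  -- km ≤ n
  have hkm : (k : ℝ) * m ≤ n := by
    have : k * m ≤ n := by
      calc k * m = ∑ j : Fin k, (Vp j).card := by simp [hm, mul_comm]
        _ = (Finset.univ.biUnion Vp).card :=
            (Finset.card_biUnion (fun a _ b _ hab => hdisj a b hab)).symm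
        _ ≤ n := Finset.card_le_univ _
    exact_mod_cast this
  -- final arithmetic
  have hmR : (0:ℝ) < m := by exact_mod_cast hm0
  rw [← mul_le_mul_iff_of_pos_right hmR]
  calc (δ / (n : ℝ) - d - 2*ε) * k * m ≤ (δ / (n : ℝ) - d - 2*ε) * n := by
        rw [mul_assoc]; exact mul_le_mul_of_nonneg_left hkm (le_of_lt hc)
    _ = δ - (d + 2*ε) * n := by field_simp; ring
    _ ≤ (deg : ℝ) * m := by nlinarith

/-- Minimum semi-degree of the reduced digraph. Suppose `D` is a digraph
on `n` vertices, `V₀, V₁, …, V_k` is a partition of the vertices with `|V₀| ≤ εn` and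
`|V_i| = m` for `i ∈ [k]`, and `D'` is a spanning subdigraph of `D` with
`d⁺_{D'}(x) > d⁺_D(x) − (d+ε)n`, `d⁻_{D'}(x) > d⁻_D(x) − (d+ε)n` for all `x`, and
`D'[V_i]` empty. Let `R` be the reduced digraph on `[k]`, where `ij` is an arc iff
`i ≠ j` and there is a `V_i–V_j` edge in `D'`. If `δ` is a lower bound for the minimum
semi-degree of `D`, then every vertex of `R` has out- and in-degree at least
`(δ/n − d − 2ε)·k`. -/
theorem stmt_17 (V : Type*) [Fintype V] [DecidableEq V]
    (D D' : V → V → Prop) [DecidableRel D] [DecidableRel D']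
    (ε d δ : ℝ) (hε : 0 ≤ ε) (hd : 0 ≤ d)
    (k m : ℕ) (V₀ : Finset V) (Vp : Fin k → Finset V)
    (hsub : ∀ x y, D' x y → D x y)
    (hpart : ∀ x : V, x ∈ V₀ ∨ ∃ i, x ∈ Vp i)
    (hdisj : ∀ i j, i ≠ j → Disjoint (Vp i) (Vp j))
    (hdisj0 : ∀ i, Disjoint V₀ (Vp i))
    (hV₀ : (V₀.card : ℝ) ≤ ε * (Fintype.card V : ℝ))
    (hm : ∀ i, (Vp i).card = m)
    (hempty : ∀ i, ∀ x ∈ Vp i, ∀ y ∈ Vp i, ¬ D' x y)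
    (hdeg : ∀ v : V,
      δ ≤ min ((Finset.univ.filter (fun u => D v u)).card : ℝ)
              ((Finset.univ.filter (fun u => D u v)).card : ℝ))
    (hdeg' : ∀ x : V,
      ((Finset.univ.filter (fun u => D x u)).card : ℝ) - (d + ε) * (Fintype.card V : ℝ) <
        ((Finset.univ.filter (fun u => D' x u)).card : ℝ) ∧
      ((Finset.univ.filter (fun u => D u x)).card : ℝ) - (d + ε) * (Fintype.card V : ℝ) <
        ((Finset.univ.filter (fun u => D' u x)).card : ℝ))
    (R : Fin k → Fin k → Prop)
    (hR : ∀ i j, R i j ↔ i ≠ j ∧ ∃ x ∈ Vp i, ∃ y ∈ Vp j, D' x y) :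
    ∀ i : Fin k,
      (δ / (Fintype.card V : ℝ) - d - 2*ε) * (k : ℝ) ≤
        ((Finset.univ.filter (fun j => R i j)).card : ℝ) ∧
      (δ / (Fintype.card V : ℝ) - d - 2*ε) * (k : ℝ) ≤
        ((Finset.univ.filter (fun j => R j i)).card : ℝ) := by
  intro i
  constructor
  · refine stmt_17_aux V D' ε d δ hε hd k m V₀ Vp hpart hdisj hV₀ hm hempty ?_ ?_ R hR i
    · intro v
      have h1 := (hdeg v).trans (min_le_left _ _)
      have h2 := (hdeg' v).1
      linarith
    · intro v
      have h1 := (hdeg v).trans (min_le_left _ _)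
      have h2 : ((Finset.univ.filter (fun u => D v u)).card : ℝ) ≤ (Fintype.card V : ℝ) := by
        exact_mod_cast Finset.card_le_univ _
      linarith
  · have key := stmt_17_aux V (fun a b => D' b a) ε d δ hε hd k m V₀ Vp hpart hdisj hV₀ hm
      (fun i x hx y hy h => hempty i y hy x hx h) ?_ ?_ (fun a b => R b a) ?_ i
    · exact key
    · intro v
      have h1 := (hdeg v).trans (min_le_right _ _)
      have h2 := (hdeg' v).2
      linarith
    · intro v
      have h1 := (hdeg v).trans (min_le_right _ _)
      have h2 : ((Finset.univ.filter (fun u => D u v)).card : ℝ) ≤ (Fintype.card V : ℝ) := by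
        exact_mod_cast Finset.card_le_univ _
      linarith
    · intro a b
      rw [hR]
      constructor <;> rintro ⟨hne, x, hx, y, hy, h⟩ <;> exact ⟨hne.symm, y, hy, x, hx, h⟩
end
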